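/- arXiv:2205.05000 — 2 statements merged into one kernel-verified Lean document; each statement's English description precedes it below -/
import Mathlib

section
/- Let N ∈ M_{n_a}, let i ≠ j be statuses and k a subset index with N_i^{(k)} > 0, and set M = N + E_j^{(k)} − E_i^{(k)}. Then ⟨Φ_M, Φ_M⟩ / ⟨Φ_N, Φ_N⟩ = N_i^{(k)} / (N_j^{(k)} + 1). -/
open MeasureTheory Finset Function

namespace ABMFormal

abbrev E (d : ℕ) : Type := EuclideanSpace ℝ (Fin d)
abbrev FS (d n_s n_a : ℕ) : Type := (Fin n_a → E d) → (Fin n_a → Fin n_s) → ℝ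

noncomputable def occ {d m n_s n_a : ℕ} (A : Fin m → Set (E d)) (X : Fin n_a → E d)
    (S : Fin n_a → Fin n_s) (i : Fin n_s) (k : Fin m) : ℕ :=
  Set.ncard {α : Fin n_a | X α ∈ A k ∧ S α = i}

noncomputable def Phi {d m n_s n_a : ℕ} (A : Fin m → Set (E d)) (N : Fin n_s → Fin m → ℤ)
    (X : Fin n_a → E d) (S : Fin n_a → Fin n_s) : ℝ :=
  if ∀ i k, ((occ A X S i k : ℕ) : ℤ) = N i k then 1 else 0

noncomputable def Mset (n_s m n_a : ℕ) : Finset (Fin n_s → Fin m → ℤ) :=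
  ((Finset.univ : Finset (Fin n_s → Fin m → Fin (n_a + 1))).image
      fun f i k => ((f i k : ℕ) : ℤ)).filter
    fun N => (∑ i, ∑ k, N i k) = (n_a : ℤ)

def posSet {d : ℕ} (Xdom : Set (E d)) (n_a : ℕ) : Set (Fin n_a → E d) :=
  Set.univ.pi fun _ => Xdom

noncomputable def ip {d n_s n_a : ℕ} (Xdom : Set (E d)) (f g : FS d n_s n_a) : ℝ :=
  (((volume Xdom).toReal * (n_s : ℝ)) ^ n_a)⁻¹ *
    ∑ S : Fin n_a → Fin n_s, ∫ X in posSet Xdom n_a, f X S * g X S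

def one (d n_s n_a : ℕ) : FS d n_s n_a := fun _ _ => 1

def Emat {n_s m : ℕ} (i : Fin n_s) (k : Fin m) : Fin n_s → Fin m → ℤ :=
  fun i' k' => if i' = i ∧ k' = k then 1 else 0

def deltaS {n_s : ℕ} (i s : Fin n_s) : ℝ := if s = i then 1 else 0

noncomputable def deltaA {d : ℕ} (A : Set (E d)) (x : E d) : ℝ :=
  A.indicator (fun _ => (1 : ℝ)) x

noncomputable def dr {d : ℕ} (r : ℝ) (x y : E d) : ℝ := if dist x y ≤ r then 1 else 0

/-- Transition rates `λ_i^{(kl)} = (∫_{A_l} ∫_{A_k} ℓ_i(x,y) dy dx) / μ(A_k)`. -/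
noncomputable def lam {d m n_s : ℕ} (A : Fin m → Set (E d)) (K : Fin n_s → E d → E d → ℝ)
    (i : Fin n_s) (k l : Fin m) : ℝ :=
  (∫ x in A l, ∫ y in A k, K i x y) / (volume (A k)).toReal

/-- The movement generator `(L p)(X, S) = ∑_α ∫_X ℓ_{s_α}(x_α, y) p(X^{α→y}, S) dy`. -/
noncomputable def Lop {d n_s n_a : ℕ} (Xdom : Set (E d)) (K : Fin n_s → E d → E d → ℝ)
    (p : FS d n_s n_a) : FS d n_s n_a :=
  fun X S => ∑ α, ∫ y in Xdom, K (S α) (X α) y * p (Function.update X α y) S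

/-- `γ_{ij}^{(k)} = (∫_{A_k} γ_{ij}(x) dx) / μ(A_k)`. -/
noncomputable def gammaK {d m n_s : ℕ} (A : Fin m → Set (E d)) (γ : Fin n_s → Fin n_s → E d → ℝ)
    (i j : Fin n_s) (k : Fin m) : ℝ :=
  (∫ x in A k, γ i j x) / (volume (A k)).toReal

/-- First-order adoption rate function `f_{ij}^{(α)}(X,S) = δ_i(s_α) γ_{ij}(x_α)`. -/
noncomputable def fFirst {d n_s n_a : ℕ} (γ : Fin n_s → Fin n_s → E d → ℝ) (i j : Fin n_s)
    (α : Fin n_a) (X : Fin n_a → E d) (S : Fin n_a → Fin n_s) : ℝ :=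
  deltaS i (S α) * γ i j (X α)

/-- Outflow part `G₁ p = (∑_{i,j,α} f_{ij}^{(α)}) p` of the first-order adoption generator. -/
noncomputable def G1First {d n_s n_a : ℕ} (γ : Fin n_s → Fin n_s → E d → ℝ)
    (p : FS d n_s n_a) : FS d n_s n_a :=
  fun X S => (∑ i, ∑ j, ∑ α, fFirst γ i j α X S) * p X S

/-- Inflow part `G₂ p (X,S) = ∑_{i,j,α} f_{ij}^{(α)}(X, S + i e_α − j e_α) p(X, S + i e_α − j e_α)`
of the first-order adoption generator.  Since in coordinatewise integer arithmetic
`δ_i(s_α + i − j) = δ_j(s_α)`, and then `S + i e_α − j e_α = Function.update S α i` lies in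
`S^{n_a}`, while all other summands vanish by the extension-by-zero convention, the term
equals `∑_{i,j,α} δ_j(s_α) γ_{ij}(x_α) p(X, update S α i)`. -/
noncomputable def G2First {d n_s n_a : ℕ} (γ : Fin n_s → Fin n_s → E d → ℝ)
    (p : FS d n_s n_a) : FS d n_s n_a :=
  fun X S => ∑ i, ∑ j, ∑ α, deltaS j (S α) * γ i j (X α) * p X (Function.update S α i)

/-- The first-order adoption generator `G = −G₁ + G₂`. -/
noncomputable def GopFirst {d n_s n_a : ℕ} (γ : Fin n_s → Fin n_s → E d → ℝ)
    (p : FS d n_s n_a) : FS d n_s n_a :=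
  fun X S => -(G1First γ p X S) + G2First γ p X S

/-- Second-order adoption rate function
`f_{ij}^{(α)}(X,S) = δ_i(s_α) ∑_{β ≠ α} δ_j(s_β) c_{ij} d_r(x_α, x_β)`. -/
noncomputable def fSecond {d n_s n_a : ℕ} (c : Fin n_s → Fin n_s → ℝ) (r : ℝ)
    (i j : Fin n_s) (α : Fin n_a) (X : Fin n_a → E d) (S : Fin n_a → Fin n_s) : ℝ :=
  deltaS i (S α) * ∑ β ∈ Finset.univ.erase α, deltaS j (S β) * (c i j * dr r (X α) (X β))

/-- Outflow part `G₁ p = (∑_{i,j,α} f_{ij}^{(α)}) p` of the second-order adoption generator. -/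
noncomputable def G1Second {d n_s n_a : ℕ} (c : Fin n_s → Fin n_s → ℝ) (r : ℝ)
    (p : FS d n_s n_a) : FS d n_s n_a :=
  fun X S => (∑ i, ∑ j, ∑ α, fSecond c r i j α X S) * p X S

/-- Inflow part of the second-order adoption generator, the term
`∑_{i,j,α} f_{ij}^{(α)}(X, S + i e_α − j e_α) p(X, S + i e_α − j e_α)`; as in the
first-order case the only non-vanishing summands are those with `s_α = j`, giving
`∑_{i,j,α} δ_j(s_α) (∑_{β ≠ α} δ_j(s_β) c_{ij} d_r(x_α,x_β)) p(X, update S α i)`. -/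
noncomputable def G2Second {d n_s n_a : ℕ} (c : Fin n_s → Fin n_s → ℝ) (r : ℝ)
    (p : FS d n_s n_a) : FS d n_s n_a :=
  fun X S => ∑ i, ∑ j, ∑ α, deltaS j (S α) *
    (∑ β ∈ Finset.univ.erase α, deltaS j (S β) * (c i j * dr r (X α) (X β))) *
    p X (Function.update S α i)

/-- The second-order adoption generator `G = −G₁ + G₂`. -/
noncomputable def GopSecond {d n_s n_a : ℕ} (c : Fin n_s → Fin n_s → ℝ) (r : ℝ)
    (p : FS d n_s n_a) : FS d n_s n_a :=
  fun X S => -(G1Second c r p X S) + G2Second c r p X S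

/-- `b_{kl} = (∫_{A_k} ∫_{A_l} d_r(x₁,x₂) dx₂ dx₁)/(μ(A_k) μ(A_l))`. -/
noncomputable def bOf {d m : ℕ} (A : Fin m → Set (E d)) (r : ℝ) (k l : Fin m) : ℝ :=
  (∫ x in A k, ∫ y in A l, dr r x y) / ((volume (A k)).toReal * (volume (A l)).toReal)

/-- The normalized ansatz functions `Φ̂_N = Φ_N / ⟨Φ_N, 𝟙⟩`. -/
noncomputable def Phihat {d m n_s n_a : ℕ} (Xdom : Set (E d)) (A : Fin m → Set (E d))
    (N : Fin n_s → Fin m → ℤ) : FS d n_s n_a :=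
  fun X S => Phi A N X S / ip Xdom (Phi (n_a := n_a) A N) (one d n_s n_a)

/-- The Galerkin projection `Q v = ∑_{N ∈ M_{n_a}} (⟨Φ_N, v⟩/⟨Φ_N, 𝟙⟩) Φ_N`. -/
noncomputable def Qproj {d m n_s n_a : ℕ} (Xdom : Set (E d)) (A : Fin m → Set (E d))
    (v : FS d n_s n_a) : FS d n_s n_a :=
  fun X S => ∑ N ∈ Mset n_s m n_a,
    (ip Xdom (Phi (n_a := n_a) A N) v / ip Xdom (Phi (n_a := n_a) A N) (one d n_s n_a)) *
      Phi A N X S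

/-- The matrix representation `Ĥ_{NM} = ⟨Φ_M, H Φ_N⟩ / ⟨Φ_N, 𝟙⟩` of a projected operator. -/
noncomputable def Hhat {d m n_s n_a : ℕ} (Xdom : Set (E d)) (A : Fin m → Set (E d))
    (H : FS d n_s n_a →ₗ[ℝ] FS d n_s n_a) (N M : Fin n_s → Fin m → ℤ) : ℝ :=
  ip Xdom (Phi (n_a := n_a) A M) (H (Phi A N)) / ip Xdom (Phi (n_a := n_a) A N) (one d n_s n_a)


section Helpers

noncomputable def cnt {n : ℕ} {T : Type*} [Fintype T] [DecidableEq T] (g : Fin n → T) (p : T) : ℕ :=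
  (Finset.univ.filter fun α => g α = p).card

lemma cnt_update {n : ℕ} {T : Type*} [Fintype T] [DecidableEq T] (g : Fin n → T)
    (α : Fin n) (v p : T) :
    (cnt (Function.update g α v) p : ℤ)
      = cnt g p + (if v = p then 1 else 0) - (if g α = p then 1 else 0) := by
  have key : ∀ h : Fin n → T, (cnt h p : ℤ) = ∑ β, if h β = p then 1 else 0 := by
    intro h; rw [cnt, Finset.card_filter]; push_cast; rfl
  rw [key, key]
  have hfun : (fun β => if Function.update g α v β = p then (1:ℤ) else 0)
      = Function.update (fun β => if g β = p then (1:ℤ) else 0) α (if v = p then 1 else 0) := by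
    funext β
    by_cases hβ : β = α
    · subst hβ; simp
    · simp [Function.update_of_ne hβ]
  calc (∑ β, if Function.update g α v β = p then (1:ℤ) else 0)
      = ∑ β, Function.update (fun β => if g β = p then (1:ℤ) else 0) α
          (if v = p then 1 else 0) β := by rw [hfun]
    _ = (if v = p then (1:ℤ) else 0) + ∑ β ∈ Finset.univ \ {α},
          (if g β = p then (1:ℤ) else 0) := Finset.sum_update_of_mem (Finset.mem_univ α) _ _
    _ = _ := by
        rw [Finset.sum_eq_sum_sdiff_singleton_add (Finset.mem_univ α)
          (fun β => if g β = p then (1:ℤ) else 0)]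
        ring

lemma exists_cnt {n : ℕ} {T : Type*} [Fintype T] [DecidableEq T] (nv : T → ℕ)
    (h : ∑ p, nv p = n) : ∃ g : Fin n → T, ∀ p, cnt g p = nv p := by
  have hcard : Fintype.card (Fin n) = Fintype.card (Σ p : T, Fin (nv p)) := by
    simp [Fintype.card_sigma, h]
  obtain ⟨e⟩ := Fintype.card_eq.mp hcard
  refine ⟨fun α => (e α).1, fun p => ?_⟩
  rw [cnt, Finset.card_filter]
  rw [Equiv.sum_comp e (fun x : Σ q : T, Fin (nv q) => if x.1 = p then 1 else 0)]
  rw [show (Finset.univ : Finset ((q : T) × Fin (nv q)))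
      = Finset.univ.sigma (fun _ => Finset.univ) from Finset.univ_sigma_univ.symm,
    Finset.sum_sigma]
  simp [apply_ite Finset.card, Finset.sum_ite_eq' Finset.univ p (fun q => (nv q : ℕ))]

lemma prod_cnt {n : ℕ} {T : Type*} [Fintype T] [DecidableEq T] (w : T → ℝ) (nv : T → ℕ)
    (g : Fin n → T) (h : ∀ p, cnt g p = nv p) :
    ∏ α, w (g α) = ∏ p, w p ^ nv p := by
  calc ∏ α, w (g α)
      = ∏ p, ∏ α ∈ Finset.univ.filter fun α => g α = p, w (g α) :=
        (Finset.prod_fiberwise_of_maps_to (fun x _ => Finset.mem_univ _) _).symm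
    _ = ∏ p, w p ^ nv p := by
        refine Finset.prod_congr rfl fun p _ => ?_
        have h2 : ∀ α ∈ Finset.univ.filter (fun α => g α = p), w (g α) = w p := by
          intro α hα; rw [(Finset.mem_filter.mp hα).2]
        rw [Finset.prod_congr rfl h2, Finset.prod_const]
        have := h p; rw [cnt] at this; rw [this]

lemma mem_G_update {n : ℕ} {T : Type*} [Fintype T] [DecidableEq T] (a b : T → ℕ)
    (u v : T) (huv : u ≠ v) (e1 : b u + 1 = a u) (e2 : b v = a v + 1)
    (e3 : ∀ p, p ≠ u → p ≠ v → b p = a p)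
    (g : Fin n → T) (α : Fin n) (hg : ∀ p, cnt g p = b p) (hα : g α = v) :
    ∀ p, cnt (Function.update g α u) p = a p := by
  intro p
  have h := cnt_update g α u p
  rw [hα, hg p] at h
  have h2 : (cnt (Function.update g α u) p : ℤ) = (a p : ℤ) := by
    rw [h]
    rcases eq_or_ne u p with rfl | t1
    · rcases eq_or_ne v u with rfl | t2
      · exact absurd rfl huv
      · simp only [if_pos rfl, if_neg t2, if_true, eq_self_iff_true]; omega
    · rcases eq_or_ne v p with rfl | t2
      · simp only [if_neg t1, if_pos rfl, if_true, eq_self_iff_true]; omega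
      · simp only [if_neg t1, if_neg t2]
        have := e3 p (fun hp => t1 hp.symm) (fun hp => t2 hp.symm)
        omega
  exact_mod_cast h2

lemma card_rel {n : ℕ} {T : Type*} [Fintype T] [DecidableEq T] (nN nM : T → ℕ)
    (i' j' : T) (hij : i' ≠ j')
    (h1 : nM i' + 1 = nN i') (h2 : nM j' = nN j' + 1)
    (h3 : ∀ p, p ≠ i' → p ≠ j' → nM p = nN p) :
    (Finset.univ.filter fun g : Fin n → T => ∀ p, cnt g p = nM p).card * nM j'
      = (Finset.univ.filter fun g : Fin n → T => ∀ p, cnt g p = nN p).card * nN i' := by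
  classical
  set GM := Finset.univ.filter fun g : Fin n → T => ∀ p, cnt g p = nM p with hGM
  set GN := Finset.univ.filter fun g : Fin n → T => ∀ p, cnt g p = nN p with hGN
  have key : ∀ (G : Finset (Fin n → T)) (q : T) (nq : ℕ),
      (∀ g ∈ G, cnt g q = nq) →
      ((G ×ˢ (Finset.univ : Finset (Fin n))).filter fun x => x.1 x.2 = q).card
        = G.card * nq := by
    intro G q nq hG
    rw [Finset.card_filter, Finset.sum_product]
    calc (∑ g ∈ G, ∑ α : Fin n, if g α = q then 1 else 0)
        = ∑ g ∈ G, nq := by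
          refine Finset.sum_congr rfl fun g hg => ?_
          rw [← Finset.card_filter, ← cnt, hG g hg]
      _ = G.card * nq := by rw [Finset.sum_const, smul_eq_mul]
  have hcM : ((GM ×ˢ (Finset.univ : Finset (Fin n))).filter fun x => x.1 x.2 = j').card
      = GM.card * nM j' := key GM j' (nM j') (fun g hg => (Finset.mem_filter.mp hg).2 j')
  have hcN : ((GN ×ˢ (Finset.univ : Finset (Fin n))).filter fun x => x.1 x.2 = i').card
      = GN.card * nN i' := key GN i' (nN i') (fun g hg => (Finset.mem_filter.mp hg).2 i')
  rw [← hcM, ← hcN]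
  refine Finset.card_bij' (fun x _ => (Function.update x.1 x.2 i', x.2))
    (fun y _ => (Function.update y.1 y.2 j', y.2)) ?_ ?_ ?_ ?_
  · rintro ⟨g, α⟩ hx
    obtain ⟨hmem, hval⟩ := Finset.mem_filter.mp hx
    obtain ⟨hgG, -⟩ := Finset.mem_product.mp hmem
    have hg := (Finset.mem_filter.mp hgG).2
    refine Finset.mem_filter.mpr ⟨Finset.mem_product.mpr ⟨?_, Finset.mem_univ _⟩, ?_⟩
    · exact Finset.mem_filter.mpr ⟨Finset.mem_univ _,
        mem_G_update nN nM i' j' hij h1 h2 h3 g α hg hval⟩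
    · exact Function.update_self α i' g
  · rintro ⟨g, α⟩ hy
    obtain ⟨hmem, hval⟩ := Finset.mem_filter.mp hy
    obtain ⟨hgG, -⟩ := Finset.mem_product.mp hmem
    have hg := (Finset.mem_filter.mp hgG).2
    refine Finset.mem_filter.mpr ⟨Finset.mem_product.mpr ⟨?_, Finset.mem_univ _⟩, ?_⟩
    · refine Finset.mem_filter.mpr ⟨Finset.mem_univ _,
        mem_G_update nM nN j' i' (Ne.symm hij) h2.symm ?_ ?_ g α hg hval⟩
      · omega
      · intro p hpj hpi; exact (h3 p hpi hpj).symm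
    · exact Function.update_self α j' g
  · rintro ⟨g, α⟩ hx
    obtain ⟨hmem, hval⟩ := Finset.mem_filter.mp hx
    simp only [Prod.mk.injEq]
    constructor
    · rw [Function.update_idem, ← hval, Function.update_eq_self]
    · trivial
  · rintro ⟨g, α⟩ hy
    obtain ⟨hmem, hval⟩ := Finset.mem_filter.mp hy
    simp only [Prod.mk.injEq]
    constructor
    · rw [Function.update_idem, ← hval, Function.update_eq_self]
    · trivial

open Classical in
lemma ip_phi_sq {d m n_s n_a : ℕ}
    (Xdom : Set (E d)) (hXmeas : MeasurableSet Xdom)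
    (A : Fin m → Set (E d)) (hAmeas : ∀ k, MeasurableSet (A k))
    (hAdisj : Pairwise (Disjoint on A)) (hAcover : (⋃ k, A k) = Xdom)
    (hfin : ∀ k, volume (A k) < ⊤) (N : Fin n_s → Fin m → ℤ) :
    ip Xdom (Phi (n_a := n_a) A N) (Phi A N)
      = (((volume Xdom).toReal * (n_s : ℝ)) ^ n_a)⁻¹ *
        ∑ g : Fin n_a → Fin n_s × Fin m,
          (if (∀ p : Fin n_s × Fin m, (cnt g p : ℤ) = N p.1 p.2)
            then ∏ α, (volume (A (g α).2)).toReal else 0) := by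
  rw [ip]
  congr 1
  have hXm : MeasurableSet (posSet Xdom n_a) := MeasurableSet.univ_pi fun _ => hXmeas
  set P : (Fin n_a → Fin m) → Set (Fin n_a → E d) :=
    fun c => Set.univ.pi fun α => A (c α) with hPdef
  have hPmeas : ∀ c, MeasurableSet (P c) := fun c => MeasurableSet.univ_pi fun α => hAmeas _
  have hAsub : ∀ k, A k ⊆ Xdom := fun k => hAcover ▸ Set.subset_iUnion A k
  have hPsub : ∀ c, P c ⊆ posSet Xdom n_a :=
    fun c X hX α _ => hAsub _ (hX α (Set.mem_univ α))
  have hPvol : ∀ c, volume (P c) = ∏ α, volume (A (c α)) := fun c => volume_pi_pi _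
  have hPfin : ∀ c, volume (P c) < ⊤ := by
    intro c; rw [hPvol c]
    exact ENNReal.prod_lt_top (fun α _ => hfin _)
  have hstep : ∀ S : Fin n_a → Fin n_s,
      (∫ X in posSet Xdom n_a, Phi A N X S * Phi A N X S)
        = ∑ c : Fin n_a → Fin m,
            (if (∀ p : Fin n_s × Fin m, (cnt (fun α => (S α, c α)) p : ℤ) = N p.1 p.2)
              then ∏ α, (volume (A (c α))).toReal else 0) := by
    intro S
    have heq : Set.EqOn (fun X => Phi A N X S * Phi A N X S)
        (fun X => ∑ c : Fin n_a → Fin m,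
          (if (∀ p : Fin n_s × Fin m, (cnt (fun α => (S α, c α)) p : ℤ) = N p.1 p.2)
            then (1:ℝ) else 0) * (P c).indicator (fun _ => (1:ℝ)) X)
        (posSet Xdom n_a) := by
      intro X hX
      have hex : ∀ α, ∃ k, X α ∈ A k := by
        intro α
        have := hX α (Set.mem_univ α)
        rw [← hAcover] at this
        exact Set.mem_iUnion.mp this
      choose cX hcX using hex
      have huniq : ∀ α k, X α ∈ A k → k = cX α := by
        intro α k hk
        by_contra hne
        exact Set.disjoint_left.mp (hAdisj hne) hk (hcX α)
      have hmem : ∀ c, X ∈ P c ↔ c = cX := by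
        intro c
        constructor
        · intro h; funext α; exact huniq α (c α) (h α (Set.mem_univ α))
        · rintro rfl; exact fun α _ => hcX α
      have hocc : ∀ (i : Fin n_s) (k : Fin m),
          occ A X S i k = cnt (fun α => (S α, cX α)) (i, k) := by
        intro i k
        rw [occ, cnt, Set.ncard_eq_toFinset_card', Set.toFinset_setOf]
        congr 1
        apply Finset.filter_congr
        intro α _
        simp only [Prod.mk.injEq]
        constructor
        · rintro ⟨h1, h2⟩; exact ⟨h2, (huniq α k h1).symm⟩
        · rintro ⟨h1, h2⟩; exact ⟨h2 ▸ hcX α, h1⟩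
      have hcond : (∀ i k, ((occ A X S i k : ℕ) : ℤ) = N i k)
          ↔ (∀ p : Fin n_s × Fin m, (cnt (fun α => (S α, cX α)) p : ℤ) = N p.1 p.2) := by
        constructor
        · intro h p; rw [← hocc p.1 p.2]; exact h p.1 p.2
        · intro h i k; rw [hocc i k]; exact h (i, k)
      show Phi A N X S * Phi A N X S = ∑ c : Fin n_a → Fin m, _
      rw [Finset.sum_eq_single cX]
      · rw [Set.indicator_of_mem ((hmem cX).mpr rfl) (fun _ => (1:ℝ)), mul_one]
        rw [Phi, if_congr hcond rfl rfl]
        split <;> norm_num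
      · intro c _ hc
        rw [Set.indicator_of_notMem (fun h => hc ((hmem c).mp h)), mul_zero]
      · intro h; exact absurd (Finset.mem_univ cX) h
    rw [setIntegral_congr_fun hXm heq]
    rw [integral_finset_sum]
    · refine Finset.sum_congr rfl fun c _ => ?_
      rw [integral_const_mul, setIntegral_indicator (hPmeas c),
        Set.inter_eq_self_of_subset_right (hPsub c), setIntegral_const,
        smul_eq_mul, mul_one, Measure.real, hPvol c, ENNReal.toReal_prod]
      rw [ite_mul, one_mul, zero_mul]
    · intro c _
      refine Integrable.const_mul ?_ _
      rw [integrable_indicator_iff (hPmeas c)]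
      refine integrableOn_const ?_
      rw [Measure.restrict_apply (hPmeas c)]
      exact (lt_of_le_of_lt (measure_mono Set.inter_subset_left) (hPfin c)).ne
  rw [Finset.sum_congr rfl fun S _ => hstep S]
  rw [← Equiv.sum_comp (Equiv.arrowProdEquivProdArrow (Fin n_a) (fun _ => Fin n_s) (fun _ => Fin m)).symm
    (fun g : Fin n_a → Fin n_s × Fin m =>
      if (∀ p : Fin n_s × Fin m, (cnt g p : ℤ) = N p.1 p.2)
        then ∏ α, (volume (A (g α).2)).toReal else 0)]
  rw [Fintype.sum_prod_type]
  rfl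

end Helpers

/-- for `N ∈ M_{n_a}`, statuses `i ≠ j` and a subset index `k` with
`N_i^{(k)} > 0`, the matrix `M = N + E_j^{(k)} − E_i^{(k)}` satisfies
`⟨Φ_M, Φ_M⟩ / ⟨Φ_N, Φ_N⟩ = N_i^{(k)} / (N_j^{(k)} + 1)`. -/
theorem statement4 (d m n_s n_a : ℕ) (hns : 1 ≤ n_s) (hna : 1 ≤ n_a)
    (Xdom : Set (E d)) (hXcomp : IsCompact Xdom) (hXpos : 0 < volume Xdom)
    (A : Fin m → Set (E d)) (hAmeas : ∀ k, MeasurableSet (A k))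
    (hAdisj : Pairwise (Disjoint on A)) (hApos : ∀ k, 0 < volume (A k))
    (hAcover : (⋃ k, A k) = Xdom)
    (N : Fin n_s → Fin m → ℤ) (hN : N ∈ Mset n_s m n_a)
    (i j : Fin n_s) (hij : i ≠ j) (k : Fin m) (hNik : 0 < N i k)
    (M : Fin n_s → Fin m → ℤ) (hM : M = N + Emat j k - Emat i k) :
    ip Xdom (Phi (n_a := n_a) A M) (Phi A M) / ip Xdom (Phi (n_a := n_a) A N) (Phi A N)
      = (N i k : ℝ) / ((N j k : ℝ) + 1) := by
  classical
  have hXmeas : MeasurableSet Xdom := hXcomp.isClosed.measurableSet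
  have hXfin : volume Xdom < ⊤ := hXcomp.measure_lt_top
  have hAsub : ∀ k', A k' ⊆ Xdom := fun k' => hAcover ▸ Set.subset_iUnion A k'
  have hAfin : ∀ k', volume (A k') < ⊤ :=
    fun k' => lt_of_le_of_lt (measure_mono (hAsub k')) hXfin
  obtain ⟨hNim, hNsum⟩ := Finset.mem_filter.mp hN
  obtain ⟨f, -, hf⟩ := Finset.mem_image.mp hNim
  have hNnn : ∀ i' k', (0:ℤ) ≤ N i' k' := by
    intro i' k'; rw [← hf]; exact Int.natCast_nonneg _
  set nN : Fin n_s × Fin m → ℕ := fun p => (N p.1 p.2).toNat with hnNdef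
  have hnNc : ∀ p : Fin n_s × Fin m, ((nN p : ℕ) : ℤ) = N p.1 p.2 :=
    fun p => Int.toNat_of_nonneg (hNnn _ _)
  have hMik : M i k = N i k - 1 := by
    rw [hM]; simp [Emat, hij]
  have hMjk : M j k = N j k + 1 := by
    rw [hM]; simp [Emat, Ne.symm hij]
  have hMoth : ∀ p : Fin n_s × Fin m, p ≠ (i, k) → p ≠ (j, k) → M p.1 p.2 = N p.1 p.2 := by
    intro p hpi hpj
    rw [hM]
    have h1 : ¬(p.1 = j ∧ p.2 = k) := fun h => hpj (Prod.ext h.1 h.2)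
    have h2 : ¬(p.1 = i ∧ p.2 = k) := fun h => hpi (Prod.ext h.1 h.2)
    simp [Emat, h1, h2]
  have hMnn : ∀ p : Fin n_s × Fin m, (0:ℤ) ≤ M p.1 p.2 := by
    intro p
    rcases eq_or_ne p (i, k) with rfl | hpi
    · show (0:ℤ) ≤ M i k
      rw [hMik]; omega
    · rcases eq_or_ne p (j, k) with rfl | hpj
      · show (0:ℤ) ≤ M j k
        rw [hMjk]
        have := hNnn j k; omega
      · rw [hMoth p hpi hpj]; exact hNnn _ _
  set nM : Fin n_s × Fin m → ℕ := fun p => (M p.1 p.2).toNat with hnMdef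
  have hnMc : ∀ p : Fin n_s × Fin m, ((nM p : ℕ) : ℤ) = M p.1 p.2 :=
    fun p => Int.toNat_of_nonneg (hMnn p)
  have hij' : ((i, k) : Fin n_s × Fin m) ≠ (j, k) := fun h => hij (congrArg Prod.fst h)
  have e1 : nM (i, k) + 1 = nN (i, k) := by
    have hm := hnMc (i, k)
    have hn := hnNc (i, k)
    simp only at hm hn
    rw [hMik] at hm
    omega
  have e2 : nM (j, k) = nN (j, k) + 1 := by
    have hm := hnMc (j, k)
    have hn := hnNc (j, k)
    simp only at hm hn
    rw [hMjk] at hm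
    omega
  have e3 : ∀ p : Fin n_s × Fin m, p ≠ (i, k) → p ≠ (j, k) → nM p = nN p := by
    intro p h1 h2
    have hm := hnMc p
    have hn := hnNc p
    have := hMoth p h1 h2
    omega
  have hsum : ∑ p : Fin n_s × Fin m, nN p = n_a := by
    have hz : ((∑ p : Fin n_s × Fin m, nN p : ℕ) : ℤ) = (n_a : ℤ) := by
      push_cast
      rw [Fintype.sum_prod_type]
      calc (∑ i', ∑ k', ((nN (i', k') : ℕ) : ℤ)) = ∑ i', ∑ k', N i' k' := by
            exact Finset.sum_congr rfl fun i' _ =>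
              Finset.sum_congr rfl fun k' _ => hnNc (i', k')
        _ = (n_a : ℤ) := hNsum
    exact_mod_cast hz
  obtain ⟨g₀, hg₀⟩ := exists_cnt nN hsum
  have hsumN : ∀ (L : Fin n_s → Fin m → ℤ) (nL : Fin n_s × Fin m → ℕ),
      (∀ p : Fin n_s × Fin m, ((nL p : ℕ) : ℤ) = L p.1 p.2) →
      (∑ g : Fin n_a → Fin n_s × Fin m,
        (if (∀ p : Fin n_s × Fin m, (cnt g p : ℤ) = L p.1 p.2)
          then ∏ α, (volume (A (g α).2)).toReal else 0))
        = ((Finset.univ.filter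
              fun g : Fin n_a → Fin n_s × Fin m => ∀ p, cnt g p = nL p).card : ℝ)
            * ∏ p : Fin n_s × Fin m, (volume (A p.2)).toReal ^ nL p := by
    intro L nL hc
    have hiff : ∀ g : Fin n_a → Fin n_s × Fin m,
        (∀ p : Fin n_s × Fin m, (cnt g p : ℤ) = L p.1 p.2) ↔ (∀ p, cnt g p = nL p) := by
      intro g
      constructor
      · intro h p
        have := h p
        rw [← hc p] at this
        exact_mod_cast this
      · intro h p
        rw [h p, hc p]
    calc (∑ g : Fin n_a → Fin n_s × Fin m,
          (if (∀ p : Fin n_s × Fin m, (cnt g p : ℤ) = L p.1 p.2)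
            then ∏ α, (volume (A (g α).2)).toReal else 0))
        = ∑ g : Fin n_a → Fin n_s × Fin m,
          (if (∀ p, cnt g p = nL p)
            then ∏ α, (volume (A (g α).2)).toReal else 0) := by
          exact Finset.sum_congr rfl fun g _ => if_congr (hiff g) rfl rfl
      _ = ∑ g ∈ Finset.univ.filter
            (fun g : Fin n_a → Fin n_s × Fin m => ∀ p, cnt g p = nL p),
            ∏ α, (volume (A (g α).2)).toReal := (Finset.sum_filter _ _).symm
      _ = ∑ g ∈ Finset.univ.filter
            (fun g : Fin n_a → Fin n_s × Fin m => ∀ p, cnt g p = nL p),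
            ∏ p : Fin n_s × Fin m, (volume (A p.2)).toReal ^ nL p := by
          refine Finset.sum_congr rfl fun g hg => ?_
          exact prod_cnt (fun p => (volume (A p.2)).toReal) nL g (Finset.mem_filter.mp hg).2
      _ = _ := by rw [Finset.sum_const, nsmul_eq_mul]
  have hipN := ip_phi_sq (n_a := n_a) Xdom hXmeas A hAmeas hAdisj hAcover hAfin N
  have hipM := ip_phi_sq (n_a := n_a) Xdom hXmeas A hAmeas hAdisj hAcover hAfin M
  rw [hipM, hipN, hsumN M nM hnMc, hsumN N nN hnNc]
  have hWeq : (∏ p : Fin n_s × Fin m, (volume (A p.2)).toReal ^ nM p)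
      = ∏ p : Fin n_s × Fin m, (volume (A p.2)).toReal ^ nN p := by
    have hjmem : ((j, k) : Fin n_s × Fin m) ∈ Finset.univ.erase (i, k) :=
      Finset.mem_erase.mpr ⟨Ne.symm hij', Finset.mem_univ _⟩
    have expand : ∀ nv : Fin n_s × Fin m → ℕ,
        (∏ p : Fin n_s × Fin m, (volume (A p.2)).toReal ^ nv p)
          = (volume (A k)).toReal ^ nv (i, k) * ((volume (A k)).toReal ^ nv (j, k)
            * ∏ p ∈ (Finset.univ.erase ((i, k) : Fin n_s × Fin m)).erase (j, k),
                (volume (A p.2)).toReal ^ nv p) := by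
      intro nv
      rw [← Finset.mul_prod_erase Finset.univ _ (Finset.mem_univ ((i, k) : Fin n_s × Fin m)),
        ← Finset.mul_prod_erase _ _ hjmem]
    rw [expand nM, expand nN]
    have hrest : (∏ p ∈ (Finset.univ.erase ((i, k) : Fin n_s × Fin m)).erase (j, k),
          (volume (A p.2)).toReal ^ nM p)
        = ∏ p ∈ (Finset.univ.erase ((i, k) : Fin n_s × Fin m)).erase (j, k),
            (volume (A p.2)).toReal ^ nN p := by
      refine Finset.prod_congr rfl fun p hp => ?_
      obtain ⟨hpj, hpi'⟩ := Finset.mem_erase.mp hp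
      obtain ⟨hpi, -⟩ := Finset.mem_erase.mp hpi'
      rw [e3 p hpi hpj]
    rw [hrest, ← mul_assoc, ← mul_assoc, ← pow_add, ← pow_add]
    congr 2
    omega
  rw [hWeq]
  have hwpos : (0:ℝ) < ∏ p : Fin n_s × Fin m, (volume (A p.2)).toReal ^ nN p :=
    Finset.prod_pos fun p _ =>
      pow_pos (ENNReal.toReal_pos (hApos _).ne' (hAfin _).ne) _
  have hprefpos : (0:ℝ) < (((volume Xdom).toReal * (n_s : ℝ)) ^ n_a)⁻¹ := by
    apply inv_pos.mpr
    apply pow_pos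
    apply mul_pos (ENNReal.toReal_pos hXpos.ne' hXfin.ne)
    have : (0:ℕ) < n_s := hns
    exact_mod_cast this
  have hcard := card_rel (n := n_a) nN nM (i, k) (j, k) hij' e1 e2 e3
  have hcNpos : 0 < (Finset.univ.filter
      fun g : Fin n_a → Fin n_s × Fin m => ∀ p, cnt g p = nN p).card :=
    Finset.card_pos.mpr ⟨g₀, Finset.mem_filter.mpr ⟨Finset.mem_univ _, hg₀⟩⟩
  rw [mul_div_mul_left _ _ (ne_of_gt hprefpos), mul_div_mul_right _ _ (ne_of_gt hwpos)]
  have hden : (0:ℝ) < (N j k : ℝ) + 1 := by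
    have := hNnn j k
    have : (0:ℝ) ≤ (N j k : ℝ) := by exact_mod_cast this
    linarith
  have hcN0 : ((Finset.univ.filter
      fun g : Fin n_a → Fin n_s × Fin m => ∀ p, cnt g p = nN p).card : ℝ) ≠ 0 := by
    exact_mod_cast hcNpos.ne'
  rw [div_eq_div_iff hcN0 (ne_of_gt hden)]
  have hc1 : ((nM ((j, k) : Fin n_s × Fin m) : ℕ) : ℝ) = (N j k : ℝ) + 1 := by
    have hm := hnMc (j, k)
    simp only at hm
    rw [hMjk] at hm
    exact_mod_cast hm
  have hc2 : ((nN ((i, k) : Fin n_s × Fin m) : ℕ) : ℝ) = (N i k : ℝ) := by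
    have hn := hnNc (i, k)
    simp only at hn
    exact_mod_cast hn
  have hcardR : ((Finset.univ.filter
        fun g : Fin n_a → Fin n_s × Fin m => ∀ p, cnt g p = nM p).card : ℝ)
        * ((N j k : ℝ) + 1)
      = ((Finset.univ.filter
        fun g : Fin n_a → Fin n_s × Fin m => ∀ p, cnt g p = nN p).card : ℝ)
        * (N i k : ℝ) := by
    rw [← hc1, ← hc2]
    exact_mod_cast hcard
  linarith [hcardR]


end ABMFormal
end

section
/- For all M, N ∈ M_{n_a}, ⟨Φ_M, L Φ_N⟩ = ∑_{i=1}^{n_s} ∑_{k,l=1}^{m} λ_i^{(kl)} N_i^{(k)} ⟨Φ_{M − E_i^{(l)} + E_i^{(k)}}, Φ_N⟩, with the convention Φ_J := 0 for J ∉ M_{n_a}. -/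
open MeasureTheory Finset Function

namespace ABMFormal

section Aux

/-! Auxiliary machinery for `statement7`. -/

/-- Occupation numbers of a discrete cell-assignment `c`. -/
def occC {n_a n_s m : ℕ} (S : Fin n_a → Fin n_s) (c : Fin n_a → Fin m)
    (i : Fin n_s) (k : Fin m) : ℕ :=
  (Finset.univ.filter fun β => S β = i ∧ c β = k).card

/-- `c` has occupation numbers `W`. -/
def condOf {n_a n_s m : ℕ} (W : Fin n_s → Fin m → ℤ) (S : Fin n_a → Fin n_s)
    (c : Fin n_a → Fin m) : Prop :=
  ∀ i k, ((occC S c i k : ℤ) = W i k)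

instance {n_a n_s m : ℕ} (W : Fin n_s → Fin m → ℤ) (S : Fin n_a → Fin n_s)
    (c : Fin n_a → Fin m) : Decidable (condOf W S c) := by
  unfold condOf; infer_instance

/-- The box (cylinder) of a cell assignment. -/
def box {d m n_a : ℕ} (A : Fin m → Set (E d)) (c : Fin n_a → Fin m) : Set (Fin n_a → E d) :=
  Set.univ.pi fun β => A (c β)

lemma occC_cast_eq_sum {n_a n_s m : ℕ} (S : Fin n_a → Fin n_s) (c : Fin n_a → Fin m)
    (i : Fin n_s) (k : Fin m) :
    ((occC S c i k : ℤ)) = ∑ β : Fin n_a, (if S β = i ∧ c β = k then (1:ℤ) else 0) := by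
  rw [occC, Finset.card_filter]
  push_cast
  rfl

lemma occC_update {n_a n_s m : ℕ} (S : Fin n_a → Fin n_s) (c : Fin n_a → Fin m)
    (α : Fin n_a) (k' : Fin m) (i : Fin n_s) (k : Fin m) :
    ((occC S (Function.update c α k') i k : ℤ))
      = (occC S c i k : ℤ) + (if S α = i ∧ k' = k then 1 else 0)
        - (if S α = i ∧ c α = k then 1 else 0) := by
  rw [occC_cast_eq_sum, occC_cast_eq_sum,
    ← Finset.add_sum_erase _ _ (Finset.mem_univ α),
    ← Finset.add_sum_erase _ (fun β => if S β = i ∧ c β = k then (1:ℤ) else 0) (Finset.mem_univ α)]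
  have h : ∑ β ∈ Finset.univ.erase α, (if S β = i ∧ Function.update c α k' β = k then (1:ℤ) else 0)
      = ∑ β ∈ Finset.univ.erase α, (if S β = i ∧ c β = k then (1:ℤ) else 0) := by
    refine Finset.sum_congr rfl fun β hβ => ?_
    rw [Function.update_of_ne (Finset.ne_of_mem_erase hβ)]
  rw [h, Function.update_self]
  ring

lemma ite_and_comm {α : Type*} {p q : Prop} [Decidable (p ∧ q)] [Decidable (q ∧ p)] (a b : α) :
    (if p ∧ q then a else b) = if q ∧ p then a else b :=
  if_congr and_comm rfl rfl

lemma ite_eq_symm {γ : Type*} {β : Type*} [DecidableEq γ] [DecidableEq β] {x y : γ} {z w : β}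
    {a b : ℤ} : (if x = y ∧ z = w then a else b) = if y = x ∧ w = z then a else b :=
  if_congr (and_congr eq_comm eq_comm) rfl rfl

/-- Key transport: if `c α = k` and `S α = i` and `c` has occupation `M - E i l + E i k`,
then `update c α l` has occupation `M`. -/
lemma condOf_update_back {n_a n_s m : ℕ} {S : Fin n_a → Fin n_s} {c : Fin n_a → Fin m}
    {M : Fin n_s → Fin m → ℤ} {i : Fin n_s} {k l : Fin m} {α : Fin n_a}
    (hi : S α = i) (hk : c α = k)
    (hc : condOf (M - Emat i l + Emat i k) S c) :
    condOf M S (Function.update c α l) := by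
  intro i' k'
  rw [occC_update]
  have := hc i' k'
  simp only [Pi.add_apply, Pi.sub_apply, Emat] at this
  rw [hi, hk]
  rw [show (if i = i' ∧ l = k' then (1:ℤ) else 0) = if i' = i ∧ k' = l then 1 else 0 from
    ite_eq_symm, show (if i = i' ∧ k = k' then (1:ℤ) else 0) = if i' = i ∧ k' = k then 1 else 0 from
    ite_eq_symm]
  omega

/-- Key transport: if `c α = l`, `S α = i`, `c` has occupation `M`, then `update c α k`
has occupation `M - E i l + E i k`. -/
lemma condOf_update_fwd {n_a n_s m : ℕ} {S : Fin n_a → Fin n_s} {c : Fin n_a → Fin m}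
    {M : Fin n_s → Fin m → ℤ} {i : Fin n_s} {k l : Fin m} {α : Fin n_a}
    (hi : S α = i) (hl : c α = l)
    (hc : condOf M S c) :
    condOf (M - Emat i l + Emat i k) S (Function.update c α k) := by
  intro i' k'
  rw [occC_update]
  have := hc i' k'
  simp only [Pi.add_apply, Pi.sub_apply, Emat]
  rw [hi, hl]
  rw [show (if i = i' ∧ k = k' then (1:ℤ) else 0) = if i' = i ∧ k' = k then 1 else 0 from
    ite_eq_symm, show (if i = i' ∧ l = k' then (1:ℤ) else 0) = if i' = i ∧ k' = l then 1 else 0 from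
    ite_eq_symm]
  omega

lemma count_eq {n_a n_s m : ℕ} {S : Fin n_a → Fin n_s} {c : Fin n_a → Fin m}
    {N : Fin n_s → Fin m → ℤ} (hc : condOf N S c) (i : Fin n_s) (k : Fin m) :
    ((N i k : ℝ)) = ∑ α : Fin n_a, (if S α = i ∧ c α = k then (1:ℝ) else 0) := by
  have h := (hc i k).symm
  rw [h, occC_cast_eq_sum]
  push_cast
  rfl

lemma prod_update_v {n_a m : ℕ} (v : Fin m → ℝ) (c : Fin n_a → Fin m) (α : Fin n_a) (k : Fin m) :
    ∏ β : Fin n_a, v (Function.update c α k β)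
      = v k * ∏ β ∈ Finset.univ.erase α, v (c β) := by
  rw [← Finset.mul_prod_erase _ _ (Finset.mem_univ α), Function.update_self]
  congr 1
  exact Finset.prod_congr rfl fun β hβ => by rw [Function.update_of_ne (Finset.ne_of_mem_erase hβ)]

lemma prod_erase_update_v {n_a m : ℕ} (v : Fin m → ℝ) (c : Fin n_a → Fin m) (α : Fin n_a)
    (k : Fin m) :
    ∏ β ∈ Finset.univ.erase α, v (Function.update c α k β)
      = ∏ β ∈ Finset.univ.erase α, v (c β) :=
  Finset.prod_congr rfl fun β hβ => by rw [Function.update_of_ne (Finset.ne_of_mem_erase hβ)]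

end Aux
section Geo

variable {d m n_a n_s : ℕ} {Xdom : Set (E d)} {A : Fin m → Set (E d)}

lemma cell_unique (hAdisj : Pairwise (Disjoint on A)) {x : E d} {k k' : Fin m}
    (hk : x ∈ A k) (hk' : x ∈ A k') : k = k' := by
  by_contra h
  exact Set.disjoint_left.mp (hAdisj h) hk hk'

lemma exists_cell (hAcover : (⋃ k, A k) = Xdom) {x : E d} (hx : x ∈ Xdom) :
    ∃ k, x ∈ A k := Set.mem_iUnion.mp (hAcover ▸ hx)

lemma subset_dom (hAcover : (⋃ k, A k) = Xdom) (k : Fin m) : A k ⊆ Xdom := by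
  rw [← hAcover]; exact Set.subset_iUnion A k

lemma box_measurable (hAmeas : ∀ k, MeasurableSet (A k)) (c : Fin n_a → Fin m) :
    MeasurableSet (box A c) :=
  MeasurableSet.univ_pi fun β => hAmeas (c β)

lemma box_subset_pos (hAcover : (⋃ k, A k) = Xdom) (c : Fin n_a → Fin m) :
    box A c ⊆ posSet Xdom n_a := fun X hX β hβ =>
  subset_dom hAcover (c β) (hX β hβ)

lemma iUnion_box (hAcover : (⋃ k, A k) = Xdom) :
    (⋃ c : Fin n_a → Fin m, box A c) = posSet Xdom n_a := by
  apply Set.Subset.antisymm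
  · exact Set.iUnion_subset fun c => box_subset_pos hAcover c
  · intro X hX
    choose cfun hcfun using fun β => exists_cell hAcover (hX β (Set.mem_univ β))
    exact Set.mem_iUnion.mpr ⟨cfun, fun β _ => hcfun β⟩

lemma pairwise_disjoint_box (hAdisj : Pairwise (Disjoint on A)) :
    Pairwise (Disjoint on fun c : Fin n_a → Fin m => box A c) := by
  intro c c' hcc'
  have : ∃ β, c β ≠ c' β := by
    by_contra h
    push_neg at h
    exact hcc' (funext h)
  obtain ⟨β, hβ⟩ := this
  simp only [Function.onFun]
  rw [Set.disjoint_left]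
  intro X hX hX'
  exact hβ (cell_unique hAdisj (hX β (Set.mem_univ β)) (hX' β (Set.mem_univ β)))

lemma occ_of_mem_box (hAdisj : Pairwise (Disjoint on A)) {c : Fin n_a → Fin m}
    {X : Fin n_a → E d} (hX : X ∈ box A c) (S : Fin n_a → Fin n_s) (i : Fin n_s) (k : Fin m) :
    occ A X S i k = occC S c i k := by
  rw [occ, occC]
  have hset : {α : Fin n_a | X α ∈ A k ∧ S α = i}
      = ↑(Finset.univ.filter fun β => S β = i ∧ c β = k) := by
    ext α
    simp only [Set.mem_setOf_eq, Finset.coe_filter, Finset.mem_univ, true_and]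
    constructor
    · rintro ⟨h1, h2⟩
      exact ⟨h2, cell_unique hAdisj (hX α (Set.mem_univ α)) h1⟩
    · rintro ⟨h1, h2⟩
      exact ⟨h2 ▸ hX α (Set.mem_univ α), h1⟩
  rw [hset, Set.ncard_coe_finset]

lemma Phi_of_mem_box (hAdisj : Pairwise (Disjoint on A)) {c : Fin n_a → Fin m}
    {X : Fin n_a → E d} (hX : X ∈ box A c) (S : Fin n_a → Fin n_s) (W : Fin n_s → Fin m → ℤ) :
    Phi A W X S = if condOf W S c then 1 else 0 := by
  rw [Phi]
  refine if_congr ?_ rfl rfl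
  exact forall_congr' fun i => forall_congr' fun k => by rw [occ_of_mem_box hAdisj hX]

lemma update_mem_box {c : Fin n_a → Fin m} {X : Fin n_a → E d} (hX : X ∈ box A c)
    {y : E d} {l : Fin m} (hy : y ∈ A l) (α : Fin n_a) :
    Function.update X α y ∈ box A (Function.update c α l) := by
  intro β _
  show Function.update X α y β ∈ A (Function.update c α l β)
  rcases eq_or_ne β α with rfl | hβ
  · rw [Function.update_self, Function.update_self]; exact hy
  · rw [Function.update_of_ne hβ, Function.update_of_ne hβ]
    exact hX β (Set.mem_univ β)

lemma volume_box_toReal (c : Fin n_a → Fin m) :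
    (volume (box A c)).toReal = ∏ β, (volume (A (c β))).toReal := by
  rw [box, volume_pi_pi, ENNReal.toReal_prod]

end Geo
section Meas
variable {d n : ℕ} (t : Fin n → Set (E d))

lemma map_eval_restrict_pi (ht : ∀ β, MeasurableSet (t β)) (α : Fin n) :
    Measure.map (fun X : Fin n → E d => X α) (volume.restrict (Set.univ.pi t))
      = (∏ β ∈ Finset.univ.erase α, volume (t β)) • volume.restrict (t α) := by
  ext s hs
  rw [Measure.map_apply (measurable_pi_apply α) hs,
    Measure.restrict_apply (hs.preimage (measurable_pi_apply α)),
    Measure.smul_apply, Measure.restrict_apply hs, smul_eq_mul]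
  have hset : (fun X : Fin n → E d => X α) ⁻¹' s ∩ Set.univ.pi t
      = Set.univ.pi (Function.update t α (s ∩ t α)) := by
    ext X
    simp only [Set.mem_inter_iff, Set.mem_preimage, Set.mem_pi, Set.mem_univ, true_implies]
    constructor
    · rintro ⟨h1, h2⟩ β
      rcases eq_or_ne β α with rfl | hβ
      · rw [Function.update_self]; exact ⟨h1, h2 β⟩
      · rw [Function.update_of_ne hβ]; exact h2 β
    · intro h
      have hα := h α
      rw [Function.update_self] at hα
      refine ⟨hα.1, fun β => ?_⟩
      rcases eq_or_ne β α with rfl | hβ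
      · exact hα.2
      · have := h β; rwa [Function.update_of_ne hβ] at this
  rw [hset, volume_pi_pi, ← Finset.mul_prod_erase _ _ (Finset.mem_univ α),
    Function.update_self]
  have : ∏ β ∈ Finset.univ.erase α, volume (Function.update t α (s ∩ t α) β)
      = ∏ β ∈ Finset.univ.erase α, volume (t β) :=
    Finset.prod_congr rfl fun β hβ => by rw [Function.update_of_ne (Finset.ne_of_mem_erase hβ)]
  rw [this, mul_comm]

lemma setIntegral_eval (ht : ∀ β, MeasurableSet (t β)) (α : Fin n) {g : E d → ℝ}
    (hg : StronglyMeasurable g) :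
    ∫ X in Set.univ.pi t, g (X α)
      = (∏ β ∈ Finset.univ.erase α, (volume (t β)).toReal) * ∫ x in t α, g x := by
  have h1 : ∫ X in Set.univ.pi t, g (X α)
      = ∫ x, g x ∂(Measure.map (fun X : Fin n → E d => X α) (volume.restrict (Set.univ.pi t))) := by
    rw [integral_map (measurable_pi_apply α).aemeasurable]
    exact hg.aestronglyMeasurable
  rw [h1, map_eval_restrict_pi t ht α, integral_smul_measure, ENNReal.toReal_prod, smul_eq_mul]

lemma integrableOn_eval (ht : ∀ β, MeasurableSet (t β)) (hfin : ∀ β, volume (t β) ≠ ⊤)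
    (α : Fin n) {g : E d → ℝ} (hg : StronglyMeasurable g) (hgi : IntegrableOn g (t α)) :
    IntegrableOn (fun X : Fin n → E d => g (X α)) (Set.univ.pi t) := by
  have h0 : IntegrableOn (g ∘ fun X : Fin n → E d => X α) (Set.univ.pi t) ↔
      Integrable g (Measure.map (fun X : Fin n → E d => X α) (volume.restrict (Set.univ.pi t))) :=
    (integrable_map_measure hg.aestronglyMeasurable (measurable_pi_apply α).aemeasurable).symm
  have : Integrable g ((∏ β ∈ Finset.univ.erase α, volume (t β)) • volume.restrict (t α)) := by
    rcases eq_or_ne (∏ β ∈ Finset.univ.erase α, volume (t β)) 0 with h | h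
    · rw [h, zero_smul]; exact integrable_zero_measure
    · exact (integrable_smul_measure h (ENNReal.prod_ne_top fun β _ => hfin β)).mpr hgi
  exact h0.mpr (by rwa [map_eval_restrict_pi t ht α])

end Meas
section Ana

variable {d m n_s n_a : ℕ} {Xdom : Set (E d)} {A : Fin m → Set (E d)}
  {K' : Fin n_s → E d → E d → ℝ}

/-- The value of `Φ_N(X^{α→y}, S)` as a function of the cell of `y`, for `X ∈ box A c`. -/
noncomputable def phiN (A : Fin m → Set (E d)) (N : Fin n_s → Fin m → ℤ)
    (S : Fin n_a → Fin n_s) (c : Fin n_a → Fin m) (α : Fin n_a) (y : E d) : ℝ :=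
  ∑ l, (if condOf N S (Function.update c α l) then 1 else 0)
    * (A l).indicator (fun _ => (1:ℝ)) y

lemma phiN_eq (hAdisj : Pairwise (Disjoint on A)) (hAcover : (⋃ k, A k) = Xdom)
    {N : Fin n_s → Fin m → ℤ} {S : Fin n_a → Fin n_s} {c : Fin n_a → Fin m} {α : Fin n_a}
    {X : Fin n_a → E d} (hX : X ∈ box A c) {y : E d} (hy : y ∈ Xdom) :
    Phi A N (Function.update X α y) S = phiN A N S c α y := by
  obtain ⟨l₀, hl₀⟩ := exists_cell hAcover hy
  rw [Phi_of_mem_box hAdisj (update_mem_box hX hl₀ α), phiN]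
  rw [Finset.sum_eq_single l₀]
  · rw [Set.indicator_of_mem hl₀, mul_one]
  · intro l _ hl
    rw [Set.indicator_of_notMem, mul_zero]
    exact fun hyl => hl (cell_unique hAdisj hyl hl₀)
  · intro h
    exact absurd (Finset.mem_univ l₀) h

lemma phiN_sm (hAmeas : ∀ k, MeasurableSet (A k)) (N : Fin n_s → Fin m → ℤ)
    (S : Fin n_a → Fin n_s) (c : Fin n_a → Fin m) (α : Fin n_a) :
    StronglyMeasurable (phiN A N S c α) := by
  apply Finset.stronglyMeasurable_fun_sum
  intro l _
  exact (stronglyMeasurable_const.indicator (hAmeas l)).const_mul _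

lemma phiN_bound (N : Fin n_s → Fin m → ℤ) (S : Fin n_a → Fin n_s) (c : Fin n_a → Fin m)
    (α : Fin n_a) (y : E d) : ‖phiN A N S c α y‖ ≤ (m : ℝ) := by
  classical
  rw [phiN]
  refine (norm_sum_le _ _).trans ?_
  have : ∀ l : Fin m, ‖(if condOf N S (Function.update c α l) then (1:ℝ) else 0)
      * (A l).indicator (fun _ => (1:ℝ)) y‖ ≤ 1 := by
    intro l
    rw [norm_mul]
    have h1 : ‖(if condOf N S (Function.update c α l) then (1:ℝ) else 0)‖ ≤ 1 := by
      split_ifs <;> simp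
    have h2 : ‖(A l).indicator (fun _ => (1:ℝ)) y‖ ≤ 1 := by
      rw [Set.indicator_apply]; split_ifs <;> simp
    calc ‖(if condOf N S (Function.update c α l) then (1:ℝ) else 0)‖
          * ‖(A l).indicator (fun _ => (1:ℝ)) y‖ ≤ 1 * 1 :=
        mul_le_mul h1 h2 (norm_nonneg _) zero_le_one
      _ = 1 := mul_one 1
  calc ∑ l, ‖(if condOf N S (Function.update c α l) then (1:ℝ) else 0)
        * (A l).indicator (fun _ => (1:ℝ)) y‖ ≤ ∑ _l : Fin m, (1:ℝ) :=
      Finset.sum_le_sum fun l _ => this l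
    _ = (m : ℝ) := by simp

/-- The inner `y`-integral as a function of the position of agent `α`. -/
noncomputable def gfun (Xdom : Set (E d)) (A : Fin m → Set (E d))
    (K' : Fin n_s → E d → E d → ℝ) (N : Fin n_s → Fin m → ℤ) (S : Fin n_a → Fin n_s)
    (c : Fin n_a → Fin m) (α : Fin n_a) (x : E d) : ℝ :=
  ∫ y in Xdom, K' (S α) x y * phiN A N S c α y

lemma gfun_sm (hAmeas : ∀ k, MeasurableSet (A k))
    (hKm : ∀ i, StronglyMeasurable (Function.uncurry (K' i)))
    (N : Fin n_s → Fin m → ℤ) (S : Fin n_a → Fin n_s) (c : Fin n_a → Fin m) (α : Fin n_a) :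
    StronglyMeasurable (gfun Xdom A K' N S c α) := by
  have h : StronglyMeasurable
      (fun q : E d × E d => K' (S α) q.1 q.2 * phiN A N S c α q.2) :=
    (hKm (S α)).mul ((phiN_sm hAmeas N S c α).comp_measurable measurable_snd)
  exact h.integral_prod_right'

lemma gfun_int (hAmeas : ∀ k, MeasurableSet (A k))
    (hKi : ∀ i, Integrable (Function.uncurry (K' i))
      ((volume.restrict Xdom).prod (volume.restrict Xdom)))
    (N : Fin n_s → Fin m → ℤ) (S : Fin n_a → Fin n_s) (c : Fin n_a → Fin m) (α : Fin n_a) :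
    Integrable (gfun Xdom A K' N S c α) (volume.restrict Xdom) := by
  have h : Integrable (fun q : E d × E d => K' (S α) q.1 q.2 * phiN A N S c α q.2)
      ((volume.restrict Xdom).prod (volume.restrict Xdom)) := by
    have h2 : Integrable (fun q : E d × E d => phiN A N S c α q.2 * K' (S α) q.1 q.2)
        ((volume.restrict Xdom).prod (volume.restrict Xdom)) := by
      refine (hKi (S α)).bdd_mul (c := (m : ℝ))
        (((phiN_sm hAmeas N S c α).comp_measurable measurable_snd).aestronglyMeasurable) ?_
      exact Filter.Eventually.of_forall fun q => phiN_bound N S c α q.2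
    exact h2.congr (Filter.Eventually.of_forall fun q => mul_comm _ _)
  exact h.integral_prod_left

lemma gfun_split (hAmeas : ∀ k, MeasurableSet (A k)) (hAcover : (⋃ k, A k) = Xdom)
    (hKi : ∀ i, Integrable (Function.uncurry (K' i))
      ((volume.restrict Xdom).prod (volume.restrict Xdom)))
    (N : Fin n_s → Fin m → ℤ) (S : Fin n_a → Fin n_s) (c : Fin n_a → Fin m) (α : Fin n_a)
    (k₀ : Fin m) :
    ∫ x in A k₀, gfun Xdom A K' N S c α x
      = ∑ l, (if condOf N S (Function.update c α l) then (1:ℝ) else 0)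
          * ∫ x in A k₀, ∫ y in A l, K' (S α) x y := by
  classical
  have hsub := subset_dom hAcover
  have hae : ∀ᵐ x ∂(volume.restrict Xdom), gfun Xdom A K' N S c α x
      = ∑ l, (if condOf N S (Function.update c α l) then (1:ℝ) else 0)
          * ∫ y in A l, K' (S α) x y := by
    filter_upwards [(hKi (S α)).prod_right_ae] with x hx
    rw [gfun]
    have hpt : ∀ y : E d, K' (S α) x y * phiN A N S c α y
        = ∑ l, (if condOf N S (Function.update c α l) then (1:ℝ) else 0)
            * (A l).indicator (fun y' => K' (S α) x y') y := by
      intro y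
      rw [phiN, Finset.mul_sum]
      refine Finset.sum_congr rfl fun l _ => ?_
      rw [Set.indicator_apply, Set.indicator_apply]
      split_ifs <;> ring
    rw [integral_congr_ae (Filter.Eventually.of_forall hpt)]
    rw [integral_finset_sum]
    · refine Finset.sum_congr rfl fun l _ => ?_
      rw [integral_const_mul, integral_indicator (hAmeas l), Measure.restrict_restrict (hAmeas l),
        Set.inter_eq_self_of_subset_left (hsub l)]
    · intro l _
      exact (hx.indicator (hAmeas l)).const_mul _
  have hae' : ∀ᵐ x ∂(volume.restrict (A k₀)), gfun Xdom A K' N S c α x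
      = ∑ l, (if condOf N S (Function.update c α l) then (1:ℝ) else 0)
          * ∫ y in A l, K' (S α) x y :=
    hae.filter_mono (ae_mono (Measure.restrict_mono (hsub k₀) le_rfl))
  rw [integral_congr_ae hae', integral_finset_sum]
  · refine Finset.sum_congr rfl fun l _ => ?_
    rw [integral_const_mul]
  · intro l _
    have hint : Integrable (Function.uncurry (K' (S α)))
        ((volume.restrict (A k₀)).prod (volume.restrict (A l))) := by
      refine (hKi (S α)).mono_measure ?_
      rw [Measure.prod_restrict, Measure.prod_restrict]
      exact Measure.restrict_mono (Set.prod_mono (hsub k₀) (hsub l)) le_rfl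
    exact (hint.integral_prod_left).const_mul _

end Ana
section Box

variable {d m n_s n_a : ℕ} {Xdom : Set (E d)} {A : Fin m → Set (E d)}
  {K' : Fin n_s → E d → E d → ℝ}

lemma box_P (hAmeas : ∀ k, MeasurableSet (A k)) (hAdisj : Pairwise (Disjoint on A))
    (hAfin : ∀ k, volume (A k) ≠ ⊤) (W N : Fin n_s → Fin m → ℤ)
    (S : Fin n_a → Fin n_s) (c : Fin n_a → Fin m) :
    IntegrableOn (fun X => Phi A W X S * Phi A N X S) (box A c) ∧
    ∫ X in box A c, Phi A W X S * Phi A N X S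
      = (if condOf W S c then (1:ℝ) else 0) * (if condOf N S c then (1:ℝ) else 0)
          * ∏ β, (volume (A (c β))).toReal := by
  classical
  have hboxfin : volume (box A c) < ⊤ := by
    rw [box, volume_pi_pi]
    exact ENNReal.prod_lt_top fun β _ => (hAfin (c β)).lt_top
  have heq : Set.EqOn (fun X => Phi A W X S * Phi A N X S)
      (fun _ => (if condOf W S c then (1:ℝ) else 0) * (if condOf N S c then (1:ℝ) else 0))
      (box A c) := fun X hX => by
    simp only
    rw [Phi_of_mem_box hAdisj hX, Phi_of_mem_box hAdisj hX]
  constructor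
  · refine IntegrableOn.congr_fun ?_ heq.symm (box_measurable hAmeas c)
    exact integrableOn_const hboxfin.ne
  · rw [setIntegral_congr_fun (box_measurable hAmeas c) heq, setIntegral_const, measureReal_def,
      volume_box_toReal, smul_eq_mul, mul_comm]

lemma box_L (hXmeas : MeasurableSet Xdom) (hAmeas : ∀ k, MeasurableSet (A k))
    (hAdisj : Pairwise (Disjoint on A)) (hAcover : (⋃ k, A k) = Xdom)
    (hAfin : ∀ k, volume (A k) ≠ ⊤)
    (hKm : ∀ i, StronglyMeasurable (Function.uncurry (K' i)))
    (hKi : ∀ i, Integrable (Function.uncurry (K' i))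
      ((volume.restrict Xdom).prod (volume.restrict Xdom)))
    (M N : Fin n_s → Fin m → ℤ) (S : Fin n_a → Fin n_s) (c : Fin n_a → Fin m) :
    IntegrableOn (fun X => Phi A M X S * Lop Xdom K' (Phi A N) X S) (box A c) ∧
    ∫ X in box A c, Phi A M X S * Lop Xdom K' (Phi A N) X S
      = (if condOf M S c then (1:ℝ) else 0)
          * ∑ α, (∏ β ∈ Finset.univ.erase α, (volume (A (c β))).toReal)
            * ∑ l, (if condOf N S (Function.update c α l) then (1:ℝ) else 0)
                * ∫ x in A (c α), ∫ y in A l, K' (S α) x y := by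
  classical
  have hsub := subset_dom hAcover
  have hpt : ∀ X ∈ box A c, Phi A M X S * Lop Xdom K' (Phi A N) X S
      = ∑ α, (if condOf M S c then (1:ℝ) else 0) * gfun Xdom A K' N S c α (X α) := by
    intro X hX
    rw [Phi_of_mem_box hAdisj hX, Lop, Finset.mul_sum]
    refine Finset.sum_congr rfl fun α _ => ?_
    congr 1
    rw [gfun]
    refine setIntegral_congr_fun hXmeas fun y hy => ?_
    rw [phiN_eq hAdisj hAcover hX hy]
  have hterm : ∀ α : Fin n_a, IntegrableOn
      (fun X : Fin n_a → E d => (if condOf M S c then (1:ℝ) else 0)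
          * gfun Xdom A K' N S c α (X α)) (box A c) := by
    intro α
    refine Integrable.const_mul ?_ _
    refine integrableOn_eval (fun β => A (c β)) (fun β => hAmeas (c β)) (fun β => hAfin (c β)) α
      (gfun_sm hAmeas hKm N S c α) ?_
    exact (gfun_int hAmeas hKi N S c α).mono_measure
      (Measure.restrict_mono (hsub (c α)) le_rfl)
  constructor
  · refine IntegrableOn.congr_fun ?_ (fun X hX => (hpt X hX).symm) (box_measurable hAmeas c)
    exact integrable_finset_sum _ fun α _ => hterm α
  · rw [setIntegral_congr_fun (box_measurable hAmeas c) hpt,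
      integral_finset_sum _ fun α _ => hterm α]
    rw [Finset.mul_sum]
    refine Finset.sum_congr rfl fun α _ => ?_
    rw [integral_const_mul]
    congr 1
    rw [show box A c = Set.univ.pi (fun β => A (c β)) from rfl]
    rw [setIntegral_eval (fun β => A (c β)) (fun β => hAmeas (c β)) α
      (gfun_sm hAmeas hKm N S c α)]
    rw [gfun_split hAmeas hAcover hKi N S c α (c α)]

end Box
section Comb

lemma sum_move1 {α β₁ β₂ β₃ : Type*} [Fintype α] [Fintype β₁] [Fintype β₂] [Fintype β₃]
    (f : α → β₁ → β₂ → β₃ → ℝ) :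
    ∑ a, ∑ b₁, ∑ b₂, ∑ b₃, f a b₁ b₂ b₃ = ∑ b₁, ∑ b₂, ∑ b₃, ∑ a, f a b₁ b₂ b₃ := by
  rw [Finset.sum_comm]
  refine Finset.sum_congr rfl fun b₁ _ => ?_
  rw [Finset.sum_comm]
  exact Finset.sum_congr rfl fun b₂ _ => Finset.sum_comm

lemma sum_blocks3 {α₁ α₂ α₃ β₁ β₂ β₃ : Type*} [Fintype α₁] [Fintype α₂] [Fintype α₃]
    [Fintype β₁] [Fintype β₂] [Fintype β₃]
    (f : α₁ → α₂ → α₃ → β₁ → β₂ → β₃ → ℝ) :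
    ∑ a₁, ∑ a₂, ∑ a₃, ∑ b₁, ∑ b₂, ∑ b₃, f a₁ a₂ a₃ b₁ b₂ b₃
      = ∑ b₁, ∑ b₂, ∑ b₃, ∑ a₁, ∑ a₂, ∑ a₃, f a₁ a₂ a₃ b₁ b₂ b₃ := by
  have h1 : ∑ a₁, ∑ a₂, ∑ a₃, ∑ b₁, ∑ b₂, ∑ b₃, f a₁ a₂ a₃ b₁ b₂ b₃
      = ∑ a₁, ∑ a₂, ∑ b₁, ∑ b₂, ∑ b₃, ∑ a₃, f a₁ a₂ a₃ b₁ b₂ b₃ :=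
    Finset.sum_congr rfl fun a₁ _ => Finset.sum_congr rfl fun a₂ _ =>
      sum_move1 (fun a₃ b₁ b₂ b₃ => f a₁ a₂ a₃ b₁ b₂ b₃)
  have h2 : ∑ a₁, ∑ a₂, ∑ b₁, ∑ b₂, ∑ b₃, ∑ a₃, f a₁ a₂ a₃ b₁ b₂ b₃
      = ∑ a₁, ∑ b₁, ∑ b₂, ∑ b₃, ∑ a₂, ∑ a₃, f a₁ a₂ a₃ b₁ b₂ b₃ :=
    Finset.sum_congr rfl fun a₁ _ =>
      sum_move1 (fun a₂ b₁ b₂ b₃ => ∑ a₃, f a₁ a₂ a₃ b₁ b₂ b₃)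
  have h3 : ∑ a₁, ∑ b₁, ∑ b₂, ∑ b₃, ∑ a₂, ∑ a₃, f a₁ a₂ a₃ b₁ b₂ b₃
      = ∑ b₁, ∑ b₂, ∑ b₃, ∑ a₁, ∑ a₂, ∑ a₃, f a₁ a₂ a₃ b₁ b₂ b₃ :=
    sum_move1 (fun a₁ b₁ b₂ b₃ => ∑ a₂, ∑ a₃, f a₁ a₂ a₃ b₁ b₂ b₃)
  rw [h1, h2, h3]

/-- The central combinatorial identity. -/
lemma comb {n_a n_s m : ℕ} (v : Fin m → ℝ) (lam' : Fin n_s → Fin m → Fin m → ℝ)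
    (D : Fin n_s → Fin m → Fin m → ℝ) (M N : Fin n_s → Fin m → ℤ)
    (hD : ∀ i k l, D i k l = lam' i k l * v k) :
    ∑ S : Fin n_a → Fin n_s, ∑ c : Fin n_a → Fin m,
      (if condOf M S c then (1:ℝ) else 0)
        * ∑ α, (∏ β ∈ Finset.univ.erase α, v (c β))
          * ∑ l, (if condOf N S (Function.update c α l) then (1:ℝ) else 0) * D (S α) l (c α)
    = ∑ i, ∑ k, ∑ l, lam' i k l * ((N i k : ℤ) : ℝ)
        * ∑ S : Fin n_a → Fin n_s, ∑ c : Fin n_a → Fin m,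
            ((if condOf (M - Emat i l + Emat i k) S c then (1:ℝ) else 0)
              * (if condOf N S c then (1:ℝ) else 0) * ∏ β, v (c β)) := by
  classical
  -- the common intermediate form
  have key : ∀ (i : Fin n_s) (k l : Fin m) (S : Fin n_a → Fin n_s) (α : Fin n_a),
      ∑ c : Fin n_a → Fin m,
        (if (condOf (M - Emat i l + Emat i k) S c ∧ condOf N S c ∧ S α = i ∧ c α = k)
          then lam' i k l * ∏ β, v (c β) else 0)
      = ∑ c : Fin n_a → Fin m,
        (if (condOf M S c ∧ condOf N S (Function.update c α k) ∧ S α = i ∧ c α = l)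
          then lam' i k l * v k * ∏ β ∈ Finset.univ.erase α, v (c β) else 0) := by
    intro i k l S α
    rw [← Finset.sum_filter, ← Finset.sum_filter]
    refine Finset.sum_nbij' (fun c => Function.update c α l) (fun c => Function.update c α k)
      ?_ ?_ ?_ ?_ ?_
    · intro c hc
      simp only [Finset.mem_filter, Finset.mem_univ, true_and] at hc ⊢
      obtain ⟨hM', hN, hi, hk⟩ := hc
      have hck : Function.update c α k = c := by rw [← hk]; exact Function.update_eq_self α c
      refine ⟨condOf_update_back hi hk hM', ?_, hi, Function.update_self α l c⟩
      rw [Function.update_idem, hck]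
      exact hN
    · intro c hc
      simp only [Finset.mem_filter, Finset.mem_univ, true_and] at hc ⊢
      obtain ⟨hM, hN', hi, hl⟩ := hc
      exact ⟨condOf_update_fwd hi hl hM, hN', hi, Function.update_self α k c⟩
    · intro c hc
      simp only [Finset.mem_filter, Finset.mem_univ, true_and] at hc
      show Function.update (Function.update c α l) α k = c
      rw [Function.update_idem, ← hc.2.2.2]
      exact Function.update_eq_self α c
    · intro c hc
      simp only [Finset.mem_filter, Finset.mem_univ, true_and] at hc
      show Function.update (Function.update c α k) α l = c
      rw [Function.update_idem, ← hc.2.2.2]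
      exact Function.update_eq_self α c
    · intro c hc
      simp only [Finset.mem_filter, Finset.mem_univ, true_and] at hc
      rw [prod_erase_update_v, ← Finset.mul_prod_erase (Finset.univ) (fun β => v (c β))
        (Finset.mem_univ α), hc.2.2.2]
      ring
  -- collapse of the (i, l) sums
  have collapse : ∀ (S : Fin n_a → Fin n_s) (c : Fin n_a → Fin m) (α : Fin n_a),
      ∑ i, ∑ k, ∑ l,
        (if (condOf M S c ∧ condOf N S (Function.update c α k) ∧ S α = i ∧ c α = l)
          then lam' i k l * v k * ∏ β ∈ Finset.univ.erase α, v (c β) else 0)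
      = ∑ k, (if (condOf M S c ∧ condOf N S (Function.update c α k))
          then lam' (S α) k (c α) * v k * ∏ β ∈ Finset.univ.erase α, v (c β) else 0) := by
    intro S c α
    rw [Finset.sum_eq_single (S α)]
    · have h2 : ∀ k : Fin m, ∑ l,
          (if (condOf M S c ∧ condOf N S (Function.update c α k) ∧ S α = S α ∧ c α = l)
            then lam' (S α) k l * v k * ∏ β ∈ Finset.univ.erase α, v (c β) else 0)
          = (if (condOf M S c ∧ condOf N S (Function.update c α k))
            then lam' (S α) k (c α) * v k * ∏ β ∈ Finset.univ.erase α, v (c β) else 0) := by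
        intro k
        rw [Finset.sum_eq_single (c α)]
        · refine if_congr ?_ rfl rfl
          constructor
          · rintro ⟨h1, h2, _, _⟩; exact ⟨h1, h2⟩
          · rintro ⟨h1, h2⟩; exact ⟨h1, h2, rfl, rfl⟩
        · intro l _ hl
          rw [if_neg]
          rintro ⟨_, _, _, h⟩; exact hl h.symm
        · intro h; exact absurd (Finset.mem_univ _) h
      exact Finset.sum_congr rfl fun k _ => h2 k
    · intro i _ hi
      refine Finset.sum_eq_zero fun k _ => Finset.sum_eq_zero fun l _ => ?_
      rw [if_neg]
      rintro ⟨_, _, h, _⟩; exact hi h.symm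
    · intro h; exact absurd (Finset.mem_univ _) h
  -- the RHS transformation
  have rhs : ∀ (i : Fin n_s) (k l : Fin m),
      lam' i k l * ((N i k : ℤ) : ℝ)
        * ∑ S : Fin n_a → Fin n_s, ∑ c : Fin n_a → Fin m,
            ((if condOf (M - Emat i l + Emat i k) S c then (1:ℝ) else 0)
              * (if condOf N S c then (1:ℝ) else 0) * ∏ β, v (c β))
      = ∑ S : Fin n_a → Fin n_s, ∑ α : Fin n_a, ∑ c : Fin n_a → Fin m,
        (if (condOf M S c ∧ condOf N S (Function.update c α k) ∧ S α = i ∧ c α = l)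
          then lam' i k l * v k * ∏ β ∈ Finset.univ.erase α, v (c β) else 0) := by
    intro i k l
    rw [Finset.mul_sum]
    refine Finset.sum_congr rfl fun S _ => ?_
    have step1 : lam' i k l * ((N i k : ℤ) : ℝ) * ∑ c : Fin n_a → Fin m,
        ((if condOf (M - Emat i l + Emat i k) S c then (1:ℝ) else 0)
          * (if condOf N S c then (1:ℝ) else 0) * ∏ β, v (c β))
        = ∑ α : Fin n_a, ∑ c : Fin n_a → Fin m,
          (if (condOf (M - Emat i l + Emat i k) S c ∧ condOf N S c ∧ S α = i ∧ c α = k)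
            then lam' i k l * ∏ β, v (c β) else 0) := by
      rw [Finset.mul_sum, Finset.sum_comm]
      refine Finset.sum_congr rfl fun c _ => ?_
      by_cases hN : condOf N S c
      · rw [if_pos hN]
        by_cases hM' : condOf (M - Emat i l + Emat i k) S c
        · rw [if_pos hM']
          rw [show lam' i k l * ((N i k : ℤ) : ℝ) * (1 * 1 * ∏ β, v (c β))
              = ((N i k : ℤ) : ℝ) * (lam' i k l * ∏ β, v (c β)) by ring]
          rw [count_eq hN i k, Finset.sum_mul]
          refine Finset.sum_congr rfl fun α _ => ?_
          rw [ite_mul, one_mul, zero_mul]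
          refine (if_congr ?_ rfl rfl).symm
          constructor
          · rintro ⟨_, _, h3, h4⟩; exact ⟨h3, h4⟩
          · rintro ⟨h3, h4⟩; exact ⟨hM', hN, h3, h4⟩
        · rw [if_neg hM']
          rw [show lam' i k l * ((N i k : ℤ) : ℝ) * (0 * 1 * ∏ β, v (c β)) = 0 by ring]
          refine (Finset.sum_eq_zero fun α _ => ?_).symm
          rw [if_neg]
          rintro ⟨h1, _, _, _⟩; exact hM' h1
      · rw [if_neg hN]
        rw [show lam' i k l * ((N i k : ℤ) : ℝ)
            * ((if condOf (M - Emat i l + Emat i k) S c then (1:ℝ) else 0) * 0 * ∏ β, v (c β))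
            = 0 by ring]
        refine (Finset.sum_eq_zero fun α _ => ?_).symm
        rw [if_neg]
        rintro ⟨_, h2, _, _⟩; exact hN h2
    rw [step1]
    exact Finset.sum_congr rfl fun α _ => key i k l S α
  -- assembling
  calc ∑ S : Fin n_a → Fin n_s, ∑ c : Fin n_a → Fin m,
      (if condOf M S c then (1:ℝ) else 0)
        * ∑ α, (∏ β ∈ Finset.univ.erase α, v (c β))
          * ∑ l, (if condOf N S (Function.update c α l) then (1:ℝ) else 0) * D (S α) l (c α)
      = ∑ S : Fin n_a → Fin n_s, ∑ c : Fin n_a → Fin m, ∑ α : Fin n_a,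
          ∑ k, (if (condOf M S c ∧ condOf N S (Function.update c α k))
            then lam' (S α) k (c α) * v k * ∏ β ∈ Finset.univ.erase α, v (c β) else 0) := by
        refine Finset.sum_congr rfl fun S _ => Finset.sum_congr rfl fun c _ => ?_
        rw [Finset.mul_sum]
        refine Finset.sum_congr rfl fun α _ => ?_
        rw [Finset.mul_sum, Finset.mul_sum]
        refine Finset.sum_congr rfl fun k _ => ?_
        rw [hD (S α) k (c α)]
        by_cases hM : condOf M S c <;> by_cases hN : condOf N S (Function.update c α k) <;>
          simp [hM, hN] <;> ring
    _ = ∑ S : Fin n_a → Fin n_s, ∑ c : Fin n_a → Fin m, ∑ α : Fin n_a,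
          ∑ i, ∑ k, ∑ l,
            (if (condOf M S c ∧ condOf N S (Function.update c α k) ∧ S α = i ∧ c α = l)
              then lam' i k l * v k * ∏ β ∈ Finset.univ.erase α, v (c β) else 0) := by
        exact Finset.sum_congr rfl fun S _ => Finset.sum_congr rfl fun c _ =>
          Finset.sum_congr rfl fun α _ => (collapse S c α).symm
    _ = ∑ i, ∑ k, ∑ l, ∑ S : Fin n_a → Fin n_s, ∑ c : Fin n_a → Fin m, ∑ α : Fin n_a,
            (if (condOf M S c ∧ condOf N S (Function.update c α k) ∧ S α = i ∧ c α = l)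
              then lam' i k l * v k * ∏ β ∈ Finset.univ.erase α, v (c β) else 0) :=
        (sum_blocks3 (fun i k l S c α =>
          (if (condOf M S c ∧ condOf N S (Function.update c α k) ∧ S α = i ∧ c α = l)
            then lam' i k l * v k * ∏ β ∈ Finset.univ.erase α, v (c β) else 0))).symm
    _ = ∑ i, ∑ k, ∑ l, lam' i k l * ((N i k : ℤ) : ℝ)
        * ∑ S : Fin n_a → Fin n_s, ∑ c : Fin n_a → Fin m,
            ((if condOf (M - Emat i l + Emat i k) S c then (1:ℝ) else 0)
              * (if condOf N S c then (1:ℝ) else 0) * ∏ β, v (c β)) := by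
        refine Finset.sum_congr rfl fun i _ => Finset.sum_congr rfl fun k _ =>
          Finset.sum_congr rfl fun l _ => ?_
        rw [rhs i k l]
        exact Finset.sum_congr rfl fun S _ => Finset.sum_comm

end Comb
section Pos

variable {d m n_s n_a : ℕ} {Xdom : Set (E d)} {A : Fin m → Set (E d)}
  {K' : Fin n_s → E d → E d → ℝ}

lemma pos_L (hXmeas : MeasurableSet Xdom) (hAmeas : ∀ k, MeasurableSet (A k))
    (hAdisj : Pairwise (Disjoint on A)) (hAcover : (⋃ k, A k) = Xdom)
    (hAfin : ∀ k, volume (A k) ≠ ⊤)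
    (hKm : ∀ i, StronglyMeasurable (Function.uncurry (K' i)))
    (hKi : ∀ i, Integrable (Function.uncurry (K' i))
      ((volume.restrict Xdom).prod (volume.restrict Xdom)))
    (M N : Fin n_s → Fin m → ℤ) (S : Fin n_a → Fin n_s) :
    ∫ X in posSet Xdom n_a, Phi A M X S * Lop Xdom K' (Phi A N) X S
      = ∑ c : Fin n_a → Fin m, (if condOf M S c then (1:ℝ) else 0)
          * ∑ α, (∏ β ∈ Finset.univ.erase α, (volume (A (c β))).toReal)
            * ∑ l, (if condOf N S (Function.update c α l) then (1:ℝ) else 0)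
                * ∫ x in A (c α), ∫ y in A l, K' (S α) x y := by
  rw [← iUnion_box hAcover,
    integral_iUnion_fintype (fun c => box_measurable hAmeas c) (pairwise_disjoint_box hAdisj)
      (fun c => (box_L hXmeas hAmeas hAdisj hAcover hAfin hKm hKi M N S c).1)]
  exact Finset.sum_congr rfl fun c _ =>
    (box_L hXmeas hAmeas hAdisj hAcover hAfin hKm hKi M N S c).2

lemma pos_P (hAmeas : ∀ k, MeasurableSet (A k)) (hAdisj : Pairwise (Disjoint on A))
    (hAcover : (⋃ k, A k) = Xdom) (hAfin : ∀ k, volume (A k) ≠ ⊤)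
    (W N : Fin n_s → Fin m → ℤ) (S : Fin n_a → Fin n_s) :
    ∫ X in posSet Xdom n_a, Phi A W X S * Phi A N X S
      = ∑ c : Fin n_a → Fin m, ((if condOf W S c then (1:ℝ) else 0)
          * (if condOf N S c then (1:ℝ) else 0) * ∏ β, (volume (A (c β))).toReal) := by
  rw [← iUnion_box hAcover,
    integral_iUnion_fintype (fun c => box_measurable hAmeas c) (pairwise_disjoint_box hAdisj)
      (fun c => (box_P hAmeas hAdisj hAfin W N S c).1)]
  exact Finset.sum_congr rfl fun c _ => (box_P hAmeas hAdisj hAfin W N S c).2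

lemma ae_eval_pi {n : ℕ} (t : Fin n → Set (E d)) (ht : ∀ β, MeasurableSet (t β)) (α : Fin n) {Q : E d → Prop}
    (hQ : ∀ᵐ x ∂volume.restrict (t α), Q x) :
    ∀ᵐ X ∂volume.restrict (Set.univ.pi t), Q (X α) := by
  rw [ae_iff] at hQ ⊢
  set B := toMeasurable (volume.restrict (t α)) {x | ¬ Q x} with hBdef
  have hB : MeasurableSet B := measurableSet_toMeasurable _ _
  have hB0 : volume.restrict (t α) B = 0 := by
    rw [hBdef, measure_toMeasurable]; exact hQ
  refine measure_mono_null (fun X hX => ?_)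
    (show volume.restrict (Set.univ.pi t) ((fun X : Fin n → E d => X α) ⁻¹' B) = 0 from ?_)
  · exact Set.mem_preimage.mpr (subset_toMeasurable _ _ hX)
  · have := map_eval_restrict_pi t ht α
    have h2 : volume.restrict (Set.univ.pi t) ((fun X : Fin n → E d => X α) ⁻¹' B)
        = Measure.map (fun X : Fin n → E d => X α) (volume.restrict (Set.univ.pi t)) B := by
      rw [Measure.map_apply (measurable_pi_apply α) hB]
    rw [h2, map_eval_restrict_pi t ht α, Measure.smul_apply, hB0, smul_zero]

end Pos
section Transfer

variable {d m n_s n_a : ℕ} {Xdom : Set (E d)} {A : Fin m → Set (E d)}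

lemma lop_transfer (hXmeas : MeasurableSet Xdom) {K K' : Fin n_s → E d → E d → ℝ}
    (hae : ∀ i, Function.uncurry (K i)
      =ᵐ[(volume.restrict Xdom).prod (volume.restrict Xdom)] Function.uncurry (K' i))
    (p : FS d n_s n_a) (f : (Fin n_a → E d) → (Fin n_a → Fin n_s) → ℝ) (S : Fin n_a → Fin n_s) :
    ∫ X in posSet Xdom n_a, f X S * Lop Xdom K p X S
      = ∫ X in posSet Xdom n_a, f X S * Lop Xdom K' p X S := by
  refine integral_congr_ae ?_
  have h2 : ∀ᵐ x ∂volume.restrict Xdom, ∀ i,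
      (fun y => K i x y) =ᵐ[volume.restrict Xdom] fun y => K' i x y :=
    ae_all_iff.mpr fun i => Measure.ae_ae_of_ae_prod (hae i)
  have h3 : ∀ α : Fin n_a, ∀ᵐ X ∂volume.restrict (posSet Xdom n_a), ∀ i,
      (fun y => K i (X α) y) =ᵐ[volume.restrict Xdom] fun y => K' i (X α) y := by
    intro α
    have := ae_eval_pi (fun _ : Fin n_a => Xdom) (fun _ => hXmeas) α h2
    exact this
  have h4 : ∀ᵐ X ∂volume.restrict (posSet Xdom n_a), ∀ α : Fin n_a, ∀ i,
      (fun y => K i (X α) y) =ᵐ[volume.restrict Xdom] fun y => K' i (X α) y :=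
    ae_all_iff.mpr h3
  filter_upwards [h4] with X hX
  have : Lop Xdom K p X S = Lop Xdom K' p X S := by
    rw [Lop, Lop]
    refine Finset.sum_congr rfl fun α _ => integral_congr_ae ?_
    exact (hX α (S α)).mul Filter.EventuallyEq.rfl
  rw [this]

lemma lam_transfer (hAcover : (⋃ k, A k) = Xdom) {K K' : Fin n_s → E d → E d → ℝ}
    (hae : ∀ i, Function.uncurry (K i)
      =ᵐ[(volume.restrict Xdom).prod (volume.restrict Xdom)] Function.uncurry (K' i))
    (i : Fin n_s) (k l : Fin m) : lam A K i k l = lam A K' i k l := by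
  have hsub := subset_dom hAcover
  rw [lam, lam]
  congr 1
  refine integral_congr_ae ?_
  have h2 : ∀ᵐ x ∂volume.restrict Xdom,
      (fun y => K i x y) =ᵐ[volume.restrict Xdom] fun y => K' i x y :=
    Measure.ae_ae_of_ae_prod (hae i)
  have h2' : ∀ᵐ x ∂volume.restrict (A l),
      (fun y => K i x y) =ᵐ[volume.restrict Xdom] fun y => K' i x y :=
    h2.filter_mono (ae_mono (Measure.restrict_mono (hsub l) le_rfl))
  filter_upwards [h2'] with x hx
  exact integral_congr_ae (hx.filter_mono (ae_mono (Measure.restrict_mono (hsub k) le_rfl)))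

lemma D_eq_lam {K' : Fin n_s → E d → E d → ℝ} (hAfin : ∀ k, volume (A k) ≠ ⊤)
    (i : Fin n_s) (k l : Fin m) :
    (∫ x in A l, ∫ y in A k, K' i x y) = lam A K' i k l * (volume (A k)).toReal := by
  rcases eq_or_ne (volume (A k)) 0 with h0 | h0
  · have hz : ∀ x : E d, (∫ y in A k, K' i x y) = 0 := fun x => by
      rw [Measure.restrict_eq_zero.mpr h0, integral_zero_measure]
    simp only [hz, integral_zero]
    rw [show (volume (A k)).toReal = 0 by rw [h0, ENNReal.toReal_zero], mul_zero]
  · rw [lam, div_mul_cancel₀]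
    exact ENNReal.toReal_ne_zero.mpr ⟨h0, hAfin k⟩

end Transfer


/-- for all `M, N ∈ M_{n_a}`,
`⟨Φ_M, L Φ_N⟩ = ∑_i ∑_{k,l} λ_i^{(kl)} N_i^{(k)} ⟨Φ_{M − E_i^{(l)} + E_i^{(k)}}, Φ_N⟩`,
with the convention `Φ_J := 0` for `J ∉ M_{n_a}`. -/
theorem statement7 (d m n_s n_a : ℕ) (hns : 1 ≤ n_s) (hna : 1 ≤ n_a)
    (Xdom : Set (E d)) (hXcomp : IsCompact Xdom) (hXpos : 0 < volume Xdom)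
    (A : Fin m → Set (E d)) (hAmeas : ∀ k, MeasurableSet (A k))
    (hAdisj : Pairwise (Disjoint on A)) (hApos : ∀ k, 0 < volume (A k))
    (hAcover : (⋃ k, A k) = Xdom)
    (K : Fin n_s → E d → E d → ℝ)
    (hKint : ∀ i, IntegrableOn (fun q : E d × E d => K i q.1 q.2) (Xdom ×ˢ Xdom))
    (M N : Fin n_s → Fin m → ℤ)
    (hM : M ∈ Mset n_s m n_a) (hN : N ∈ Mset n_s m n_a) :
    ip Xdom (Phi (n_a := n_a) A M) (Lop Xdom K (Phi A N))
      = ∑ i : Fin n_s, ∑ k : Fin m, ∑ l : Fin m,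
          lam A K i k l * (N i k : ℝ) *
            ip Xdom (Phi (n_a := n_a) A (M - Emat i l + Emat i k)) (Phi A N) := by
  classical
  have hXmeas : MeasurableSet Xdom := hXcomp.isClosed.measurableSet
  have hsub := subset_dom hAcover
  have hAfin : ∀ k, volume (A k) ≠ ⊤ :=
    fun k => ((measure_mono (hsub k)).trans_lt hXcomp.measure_lt_top).ne
  have hrp : (volume : Measure (E d × E d)).restrict (Xdom ×ˢ Xdom)
      = (volume.restrict Xdom).prod (volume.restrict Xdom) := by
    rw [Measure.prod_restrict, ← Measure.volume_eq_prod]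
  -- a strongly measurable modification of the kernels
  set K' : Fin n_s → E d → E d → ℝ :=
    fun i x y => ((hKint i).1.mk (fun q : E d × E d => K i q.1 q.2)) (x, y) with hK'def
  have hKm : ∀ i, StronglyMeasurable (Function.uncurry (K' i)) :=
    fun i => (hKint i).1.stronglyMeasurable_mk
  have hae : ∀ i, Function.uncurry (K i)
      =ᵐ[(volume.restrict Xdom).prod (volume.restrict Xdom)] Function.uncurry (K' i) := by
    intro i
    rw [← hrp]
    exact (hKint i).1.ae_eq_mk
  have hKi : ∀ i, Integrable (Function.uncurry (K' i))
      ((volume.restrict Xdom).prod (volume.restrict Xdom)) := by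
    intro i
    rw [← hrp]
    exact (hKint i).congr (hKint i).1.ae_eq_mk
  -- pass to the modified kernel on both sides
  have hip : ip Xdom (Phi (n_a := n_a) A M) (Lop Xdom K (Phi A N))
      = ip Xdom (Phi (n_a := n_a) A M) (Lop Xdom K' (Phi A N)) := by
    rw [ip, ip]
    congr 1
    exact Finset.sum_congr rfl fun S _ =>
      lop_transfer hXmeas hae (Phi A N) (Phi A M) S
  rw [hip]
  have hlam : ∀ (i : Fin n_s) (k l : Fin m), lam A K i k l = lam A K' i k l :=
    lam_transfer hAcover hae
  simp only [hlam]
  -- main computation for the measurable kernel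
  set v : Fin m → ℝ := fun k => (volume (A k)).toReal with hvdef
  set C : ℝ := (((volume Xdom).toReal * (n_s : ℝ)) ^ n_a)⁻¹ with hCdef
  have hL : ip Xdom (Phi (n_a := n_a) A M) (Lop Xdom K' (Phi A N))
      = C * ∑ S : Fin n_a → Fin n_s, ∑ c : Fin n_a → Fin m,
          (if condOf M S c then (1:ℝ) else 0)
            * ∑ α, (∏ β ∈ Finset.univ.erase α, v (c β))
              * ∑ l, (if condOf N S (Function.update c α l) then (1:ℝ) else 0)
                  * ∫ x in A (c α), ∫ y in A l, K' (S α) x y := by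
    rw [ip]
    congr 1
    exact Finset.sum_congr rfl fun S _ =>
      pos_L hXmeas hAmeas hAdisj hAcover hAfin hKm hKi M N S
  have hR : ∀ (i : Fin n_s) (k l : Fin m),
      ip Xdom (Phi (n_a := n_a) A (M - Emat i l + Emat i k)) (Phi A N)
        = C * ∑ S : Fin n_a → Fin n_s, ∑ c : Fin n_a → Fin m,
            ((if condOf (M - Emat i l + Emat i k) S c then (1:ℝ) else 0)
              * (if condOf N S c then (1:ℝ) else 0) * ∏ β, v (c β)) := by
    intro i k l
    rw [ip]
    congr 1
    exact Finset.sum_congr rfl fun S _ =>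
      pos_P hAmeas hAdisj hAcover hAfin (M - Emat i l + Emat i k) N S
  rw [hL]
  have hcomb := comb (n_a := n_a) v (lam A K')
    (fun i k l => ∫ x in A l, ∫ y in A k, K' i x y) M N
    (fun i k l => D_eq_lam hAfin i k l)
  rw [hcomb]
  rw [Finset.mul_sum]
  refine Finset.sum_congr rfl fun i _ => ?_
  rw [Finset.mul_sum]
  refine Finset.sum_congr rfl fun k _ => ?_
  rw [Finset.mul_sum]
  refine Finset.sum_congr rfl fun l _ => ?_
  rw [hR i k l]
  ring


end ABMFormal
end
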